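/- If h and h' are two height functions whose spin projections coincide, then h' − h is a constant function whose value is an integer multiple of 4. -/

import Mathlib

/-!
We identify the set `(ℤ²)* = ℤ² + (1/2, 1/2)` of faces of `ℤ²` with `ℤ × ℤ`
(the face `p` corresponding to the point `p + (1/2, 1/2)`).  The even sublattice `𝕃`
consists of the faces `p` with `p.1 + p.2` even.
-/

/-- Adjacency of faces of `ℤ²` (i.e. adjacency in `(ℤ²)*`): `ℓ¹`-distance one. -/
def FaceAdj (u v : ℤ × ℤ) : Prop := (u.1 - v.1).natAbs + (u.2 - v.2).natAbs = 1

/-- A height function: `|h u - h v| = 1` for adjacent faces `u, v`, and `h` is even on the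
even sublattice `𝕃`. -/
def IsHeightFunction (h : ℤ × ℤ → ℤ) : Prop :=
  (∀ u v, FaceAdj u v → (h u - h v).natAbs = 1) ∧ (∀ u, Even (u.1 + u.2) → Even (h u))

/-- The spin projection of a height function: spin `+` (here `true`) iff the height is
`0` or `1` mod `4`, spin `-` (here `false`) iff the height is `2` or `3` mod `4`. -/
def spinProj (h : ℤ × ℤ → ℤ) (v : ℤ × ℤ) : Bool := decide (h v % 4 = 0 ∨ h v % 4 = 1)

/-- The height at any face has the same parity as the coordinate sum. -/
lemma height_parity (h : ℤ × ℤ → ℤ) (hh : IsHeightFunction h) (v : ℤ × ℤ) :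
    (h v) % 2 = (v.1 + v.2) % 2 := by
  rcases Int.even_or_odd (v.1 + v.2) with he | ho
  · have h2 := hh.2 v he
    rw [Int.even_iff] at he h2; omega
  · set u : ℤ × ℤ := (v.1 + 1, v.2) with hu
    have hadj : FaceAdj u v := by simp [FaceAdj, hu]
    have h1 := hh.1 u v hadj
    have h2 := hh.2 u (by rw [Int.even_iff]; rw [Int.odd_iff] at ho; simp [hu]; omega)
    rw [Int.even_iff] at h2
    rw [Int.odd_iff] at ho
    omega

/-- Equal spins pointwise force the heights to agree modulo `4`. -/
lemma diff_mul4 (h h' : ℤ × ℤ → ℤ)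
    (hh : IsHeightFunction h) (hh' : IsHeightFunction h')
    (hspin : spinProj h = spinProj h') (v : ℤ × ℤ) :
    (4 : ℤ) ∣ (h' v - h v) := by
  have hs := congrFun hspin v
  simp only [spinProj, decide_eq_decide] at hs
  have p1 := height_parity h hh v
  have p2 := height_parity h' hh' v
  omega

/-- If `h` and `h'` are two height functions whose spin projections coincide, then `h' - h`
is a constant function whose value is an integer multiple of `4`. -/
theorem stmt_9 (h h' : ℤ × ℤ → ℤ)
    (hh : IsHeightFunction h) (hh' : IsHeightFunction h')
    (hspin : spinProj h = spinProj h') :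
    ∃ k : ℤ, ∀ v, h' v - h v = 4 * k := by
  have key : ∀ u v : ℤ × ℤ, FaceAdj u v → h' u - h u = h' v - h v := by
    intro u v hadj
    have d1 := hh.1 u v hadj
    have d2 := hh'.1 u v hadj
    have m1 := diff_mul4 h h' hh hh' hspin u
    have m2 := diff_mul4 h h' hh hh' hspin v
    omega
  have vert : ∀ x : ℤ, ∀ y : ℤ, h' (x, y) - h (x, y) = h' (x, 0) - h (x, 0) := by
    intro x y
    induction y using Int.induction_on with
    | zero => rfl
    | succ n ih =>
        have := key (x, (n : ℤ) + 1) (x, (n : ℤ)) (by simp [FaceAdj])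
        omega
    | pred n ih =>
        have := key (x, -(n : ℤ)) (x, -(n : ℤ) - 1) (by simp [FaceAdj])
        omega
  have horiz : ∀ x : ℤ, h' (x, 0) - h (x, 0) = h' (0, 0) - h (0, 0) := by
    intro x
    induction x using Int.induction_on with
    | zero => rfl
    | succ n ih =>
        have := key ((n : ℤ) + 1, 0) ((n : ℤ), 0) (by simp [FaceAdj])
        omega
    | pred n ih =>
        have := key (-(n : ℤ), 0) (-(n : ℤ) - 1, 0) (by simp [FaceAdj])
        omega
  obtain ⟨k, hk⟩ := diff_mul4 h h' hh hh' hspin (0, 0)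
  refine ⟨k, fun v => ?_⟩
  have := vert v.1 v.2
  have := horiz v.1
  simp only [Prod.mk.eta] at *
  omega
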